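/- Let (X, B, μ) be a probability space with a measure-preserving action of a countable sofic group G, and let Σ be a sofic approximation sequence. For finite measurable partitions α ≥ ξ of X, one has h_{Σ,μ}^ξ(α) ≥ h_{Σ,μ}^α(α) − H_μ(α|ξ), where H_μ(α|ξ) is the conditional Shannon entropy of α given ξ. -/

import Mathlib

open MeasureTheory Filter Finset Pointwise

section Defs

variable {G : Type*} [Group G] [DecidableEq G]
variable {X : Type*} [MeasurableSpace X] [MulAction G X]

/-- A finite measurable partition of `X`, indexed by `Fin n`. -/
def IsFinPartition {n : ℕ} (P : Fin n → Set X) : Prop :=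
  (∀ i, MeasurableSet (P i)) ∧ Pairwise (Function.onFun Disjoint P) ∧ (⋃ i, P i) = Set.univ

/-- `A` refines `P` via the index map `r` (each atom of `A` is contained in an atom of `P`). -/
def PartRefines {X : Type*} {m n : ℕ} (A : Fin m → Set X) (P : Fin n → Set X)
    (r : Fin m → Fin n) : Prop :=
  ∀ i, A i ⊆ P (r i)

/-- The uniform probability measure `ζ` of a subset of `{1,…,d}`. -/
noncomputable def unif {d : ℕ} (S : Set (Fin d)) : ℝ := S.ncard / d

/-- The cell `⋂_{s∈F} s A_{f(s)}` of the join partition `α_F`. -/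
def cellF {m : ℕ} (A : Fin m → Set X) (F : Finset G) (f : {s // s ∈ F} → Fin m) : Set X :=
  ⋂ s : {s // s ∈ F}, (s : G) • A (f s)

/-- Given the values `φ f` of a homomorphism on the cells of `α_F` (indexed by functions
`G → Fin m`, depending only on the restriction to `F`), the image `φ(s A_i)`. -/
def sBlock {m d : ℕ} (φ : (G → Fin m) → Set (Fin d)) (s : G) (i : Fin m) : Set (Fin d) :=
  ⋃ f ∈ {f : G → Fin m | f s = i}, φ f

/-- The image under `φ` of the cell of `α_F` determined by `f : F → Fin m`. -/
def cellBlock {m d : ℕ} (φ : (G → Fin m) → Set (Fin d)) (F : Finset G)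
    (f : {s // s ∈ F} → Fin m) : Set (Fin d) :=
  ⋃ g ∈ {g : G → Fin m | ∀ s : {s // s ∈ F}, g (s : G) = f s}, φ g

/-- `φ ∈ Hom_μ(α, F, δ, σ)`: `φ` is (the atom data of) a Boolean algebra homomorphism
`Σ(α_F) → P({1,…,d})` which is approximately equivariant and approximately
measure-preserving to within `δ`. -/
def IsHom (μ : Measure X) {m : ℕ} (A : Fin m → Set X) (F : Finset G) (δ : ℝ)
    {d : ℕ} (σ : G → Equiv.Perm (Fin d)) (φ : (G → Fin m) → Set (Fin d)) : Prop :=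
  (∀ f g : G → Fin m, (∀ s ∈ F, f s = g s) → φ f = φ g) ∧
  (∀ f g : G → Fin m, (∃ s ∈ F, f s ≠ g s) → Disjoint (φ f) (φ g)) ∧
  (⋃ f, φ f) = Set.univ ∧
  (∀ s ∈ F, ∑ i : Fin m,
      unif (symmDiff ((σ s) '' sBlock φ 1 i) (sBlock φ s i)) < δ) ∧
  (∑ f : {s // s ∈ F} → Fin m,
      |unif (cellBlock φ F f) - (μ (cellF A F f)).toReal| < δ)

/-- The restriction of `φ` to the coarser partition `ξ`, along the refinement map `r`. -/
def restrictHom {m n d : ℕ} (r : Fin m → Fin n) (φ : (G → Fin m) → Set (Fin d)) :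
    Fin n → Set (Fin d) :=
  fun j => ⋃ f ∈ {f : G → Fin m | r (f 1) = j}, φ f

/-- `|Hom_μ(α,F,δ,σ)|_ξ`: the number of restrictions to `ξ` of elements of
`Hom_μ(α,F,δ,σ)`. -/
noncomputable def homCount (μ : Measure X) {m n : ℕ} (A : Fin m → Set X) (r : Fin m → Fin n)
    (F : Finset G) (δ : ℝ) {d : ℕ} (σ : G → Equiv.Perm (Fin d)) : ℕ :=
  (restrictHom r '' {φ | IsHom μ A F δ σ φ}).ncard

/-- `h_{Σ,μ}^ξ(α,F,δ)`. -/
noncomputable def hFδ (μ : Measure X) {m n : ℕ} (A : Fin m → Set X) (r : Fin m → Fin n)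
    (F : Finset G) (δ : ℝ) (d : ℕ → ℕ) (σ : ∀ i, G → Equiv.Perm (Fin (d i))) : ℝ :=
  limsup (fun i => Real.log (homCount μ A r F δ (σ i)) / d i) atTop

/-- `h_{Σ,μ}^ξ(α) = inf_F inf_δ h_{Σ,μ}^ξ(α,F,δ)`, the infimum over nonempty finite
`F ⊆ G` (containing the identity, so that `α ⊆ Σ(α_F)`) and `δ > 0`. -/
noncomputable def hPartLoc (μ : Measure X) {m n : ℕ} (A : Fin m → Set X) (r : Fin m → Fin n)
    (d : ℕ → ℕ) (σ : ∀ i, G → Equiv.Perm (Fin (d i))) : ℝ :=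
  sInf { x | ∃ (F : Finset G) (δ : ℝ), (1 : G) ∈ F ∧ 0 < δ ∧ x = hFδ μ A r F δ d σ }

/-- `h_{Σ,μ}^ξ(S)`: the infimum over finite partitions `α ⊆ S` refining `ξ`. -/
noncomputable def hXi (μ : Measure X) (S : Set (Set X)) {n : ℕ} (P : Fin n → Set X)
    (d : ℕ → ℕ) (σ : ∀ i, G → Equiv.Perm (Fin (d i))) : ℝ :=
  sInf { x | ∃ (m : ℕ) (A : Fin m → Set X) (r : Fin m → Fin n),
    IsFinPartition A ∧ (∀ i, A i ∈ S) ∧ PartRefines A P r ∧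
    x = hPartLoc μ A r d σ }

/-- `h_{Σ,μ}(S)`: the supremum over finite partitions `ξ ⊆ S` of `h_{Σ,μ}^ξ(S)`. -/
noncomputable def hAlg (μ : Measure X) (S : Set (Set X))
    (d : ℕ → ℕ) (σ : ∀ i, G → Equiv.Perm (Fin (d i))) : ℝ :=
  sSup { x | ∃ (n : ℕ) (P : Fin n → Set X),
    IsFinPartition P ∧ (∀ j, P j ∈ S) ∧ x = hXi μ S P d σ }

/-- `Σ = (σ i : G → Sym(d i))` is a sofic approximation sequence: asymptotically
multiplicative and free. -/
def IsSoficApprox {G : Type*} [Group G] (d : ℕ → ℕ)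
    (σ : ∀ i, G → Equiv.Perm (Fin (d i))) : Prop :=
  (∀ s t : G, Tendsto (fun i =>
      (({k : Fin (d i) | σ i (s * t) k = σ i s (σ i t k)}.ncard : ℝ)) / d i)
      atTop (nhds 1)) ∧
  (∀ s t : G, s ≠ t → Tendsto (fun i =>
      (({k : Fin (d i) | σ i s k ≠ σ i t k}.ncard : ℝ)) / d i)
      atTop (nhds 1))

/-- The Shannon entropy `H_μ(P)` of a finite partition. -/
noncomputable def shannonEnt (μ : Measure X) {n : ℕ} (P : Fin n → Set X) : ℝ :=
  -∑ i, (μ (P i)).toReal * Real.log (μ (P i)).toReal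

end Defs
section Aux

set_option linter.unusedSectionVars false
namespace Stmt12Aux

open Real

/-! ### Counting helpers -/

lemma ncard_biUnion {α : Type*} [Finite α] {ι : Type*} (s : Finset ι)
    (S : ι → Set α)
    (h : ∀ i ∈ s, ∀ j ∈ s, i ≠ j → Disjoint (S i) (S j)) :
    (⋃ i ∈ s, S i).ncard = ∑ i ∈ s, (S i).ncard := by
  classical
  induction s using Finset.induction_on with
  | empty => simp
  | @insert a s ha ih =>
    rw [Finset.sum_insert ha, Finset.set_biUnion_insert,
      Set.ncard_union_eq ?hd (Set.toFinite _) (Set.toFinite _),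
      ih fun i hi j hj hij =>
        h i (Finset.mem_insert_of_mem hi) j (Finset.mem_insert_of_mem hj) hij]
    case hd =>
      refine Set.disjoint_iUnion₂_right.mpr fun i hi =>
        h a (Finset.mem_insert_self a s) i (Finset.mem_insert_of_mem hi)
          fun he => ha (he ▸ hi)

lemma unif_nonneg {d : ℕ} (S : Set (Fin d)) : 0 ≤ unif S := by
  unfold unif; positivity

lemma unif_biUnion {d : ℕ} {ι : Type*} (s : Finset ι) (S : ι → Set (Fin d))
    (h : ∀ i ∈ s, ∀ j ∈ s, i ≠ j → Disjoint (S i) (S j)) :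
    unif (⋃ i ∈ s, S i) = ∑ i ∈ s, unif (S i) := by
  unfold unif
  rw [ncard_biUnion s S h, Nat.cast_sum, Finset.sum_div]

end Stmt12Aux

end Aux
set_option linter.unusedSectionVars false
namespace Stmt12Aux

open Real MeasureTheory

variable {G : Type*} [Group G] [DecidableEq G]
variable {X : Type*} [MeasurableSpace X] [MulAction G X]
variable (μ : Measure X) {m n : ℕ} {A : Fin m → Set X} {F : Finset G} {δ : ℝ}
  {d : ℕ} {σ : G → Equiv.Perm (Fin d)} {φ : (G → Fin m) → Set (Fin d)}

lemma cellBlock_disjoint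
    (hφ2 : ∀ f g : G → Fin m, (∃ s ∈ F, f s ≠ g s) → Disjoint (φ f) (φ g))
    {g g' : {s // s ∈ F} → Fin m} (hgg : g ≠ g') :
    Disjoint (cellBlock φ F g) (cellBlock φ F g') := by
  obtain ⟨s, hs⟩ : ∃ s, g s ≠ g' s := by
    by_contra h; push_neg at h; exact hgg (funext h)
  unfold cellBlock
  refine Set.disjoint_iUnion₂_left.mpr fun f hf =>
    Set.disjoint_iUnion₂_right.mpr fun f' hf' => ?_
  exact hφ2 f f' ⟨s, s.2, by rw [hf s, hf' s]; exact hs⟩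

lemma restrict_id_eq (h1F : (1 : G) ∈ F) (i : Fin m) :
    restrictHom (id : Fin m → Fin m) φ i
      = ⋃ g ∈ Finset.univ.filter
          (fun g : {s // s ∈ F} → Fin m => g ⟨1, h1F⟩ = i), cellBlock φ F g := by
  ext x
  simp only [restrictHom, cellBlock, Set.mem_iUnion, Set.mem_setOf_eq,
    Finset.mem_filter, Finset.mem_univ, true_and, id_eq]
  constructor
  · rintro ⟨f, hf1, hx⟩
    exact ⟨fun s => f s, hf1, ⟨f, fun s => rfl, hx⟩⟩
  · rintro ⟨g, hg, f, hf, hx⟩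
    exact ⟨f, by rw [hf ⟨1, h1F⟩]; exact hg, hx⟩

lemma restrict_disjoint
    (hφ2 : ∀ f g : G → Fin m, (∃ s ∈ F, f s ≠ g s) → Disjoint (φ f) (φ g))
    (h1F : (1 : G) ∈ F) :
    Pairwise (Function.onFun Disjoint (restrictHom (id : Fin m → Fin m) φ)) := by
  intro i j hij
  unfold Function.onFun restrictHom
  refine Set.disjoint_iUnion₂_left.mpr fun f hf =>
    Set.disjoint_iUnion₂_right.mpr fun f' hf' => ?_
  simp only [Set.mem_setOf_eq, id_eq] at hf hf'
  exact hφ2 f f' ⟨1, h1F, by rw [hf, hf']; exact hij⟩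

lemma restrict_cover (hφ3 : (⋃ f, φ f) = Set.univ) :
    (⋃ i, restrictHom (id : Fin m → Fin m) φ i) = Set.univ := by
  apply Set.eq_univ_of_univ_subset
  rw [← hφ3]
  rintro x hx
  obtain ⟨f, hf⟩ := Set.mem_iUnion.mp hx
  exact Set.mem_iUnion.mpr ⟨f 1, Set.mem_biUnion rfl hf⟩

/-! ### cells of the join partition in `X` -/

lemma smul_set_eq_preimage (s : G) (B : Set X) :
    s • B = (fun x => s⁻¹ • x) ⁻¹' B := by
  ext x; exact Set.mem_smul_set_iff_inv_smul_mem

lemma cellF_measurable (hA : ∀ i, MeasurableSet (A i))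
    (hact : ∀ g : G, MeasurePreserving (fun x : X => g • x) μ μ)
    (g : {s // s ∈ F} → Fin m) : MeasurableSet (cellF A F g) := by
  refine MeasurableSet.iInter fun s => ?_
  rw [smul_set_eq_preimage]
  exact (hact _).measurable (hA _)

lemma cellF_disjoint (hA : IsFinPartition A) {g g' : {s // s ∈ F} → Fin m}
    (h : g ≠ g') : Disjoint (cellF A F g) (cellF A F g') := by
  obtain ⟨s, hs⟩ : ∃ s, g s ≠ g' s := by
    by_contra hc; push_neg at hc; exact h (funext hc)
  have hd : Disjoint ((s : G) • A (g s)) ((s : G) • A (g' s)) := by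
    rw [smul_set_eq_preimage, smul_set_eq_preimage]
    exact (hA.2.1 hs).preimage _
  exact hd.mono (Set.iInter_subset _ s) (Set.iInter_subset _ s)

lemma biUnion_cellF (hA : IsFinPartition A) (h1F : (1 : G) ∈ F) (i : Fin m) :
    A i = ⋃ g ∈ Finset.univ.filter
        (fun g : {s // s ∈ F} → Fin m => g ⟨1, h1F⟩ = i), cellF A F g := by
  apply Set.Subset.antisymm
  · intro x hx
    have hex : ∀ s : {s // s ∈ F}, ∃ j, (s : G)⁻¹ • x ∈ A j := by
      intro s
      have hu : (s : G)⁻¹ • x ∈ Set.univ := Set.mem_univ _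
      rw [← hA.2.2] at hu
      exact Set.mem_iUnion.mp hu
    choose g hg using hex
    have hgi : g ⟨1, h1F⟩ = i := by
      by_contra hne
      have hd := hA.2.1 hne
      have h1 : ((⟨1, h1F⟩ : {s // s ∈ F}) : G)⁻¹ • x = x := by simp
      exact Set.disjoint_left.mp hd (h1 ▸ hg ⟨1, h1F⟩) hx
    refine Set.mem_biUnion (Finset.mem_filter.mpr ⟨Finset.mem_univ _, hgi⟩) ?_
    exact Set.mem_iInter.mpr fun s => Set.mem_smul_set_iff_inv_smul_mem.mpr (hg s)
  · refine Set.iUnion₂_subset fun g hg => ?_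
    simp only [Finset.mem_filter, Finset.mem_univ, true_and] at hg
    intro x hx
    have := Set.mem_iInter.mp hx ⟨1, h1F⟩
    rw [Set.mem_smul_set_iff_inv_smul_mem] at this
    simpa [hg] using this

lemma measure_A_eq_sum [IsProbabilityMeasure μ] (hA : IsFinPartition A)
    (hact : ∀ g : G, MeasurePreserving (fun x : X => g • x) μ μ)
    (h1F : (1 : G) ∈ F) (i : Fin m) :
    (μ (A i)).toReal = ∑ g ∈ Finset.univ.filter
        (fun g : {s // s ∈ F} → Fin m => g ⟨1, h1F⟩ = i),
        (μ (cellF A F g)).toReal := by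
  rw [biUnion_cellF hA h1F i, measure_biUnion_finset ?hd
    (fun g _ => cellF_measurable μ hA.1 hact g)]
  · exact ENNReal.toReal_sum fun g _ => measure_ne_top μ _
  case hd =>
    intro g hg g' hg' hne
    exact cellF_disjoint hA hne

lemma unif_restrict_close [IsProbabilityMeasure μ] (hA : IsFinPartition A)
    (hact : ∀ g : G, MeasurePreserving (fun x : X => g • x) μ μ)
    (h1F : (1 : G) ∈ F) (hφ : IsHom μ A F δ σ φ) (i : Fin m) :
    |unif (restrictHom (id : Fin m → Fin m) φ i) - (μ (A i)).toReal| ≤ δ := by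
  have h1 : unif (restrictHom (id : Fin m → Fin m) φ i)
      = ∑ g ∈ Finset.univ.filter
          (fun g : {s // s ∈ F} → Fin m => g ⟨1, h1F⟩ = i), unif (cellBlock φ F g) := by
    rw [restrict_id_eq h1F i]
    exact unif_biUnion _ _ fun g _ g' _ h => cellBlock_disjoint hφ.2.1 h
  rw [h1, measure_A_eq_sum μ hA hact h1F i, ← Finset.sum_sub_distrib]
  refine (Finset.abs_sum_le_sum_abs _ _).trans ?_
  refine le_trans (Finset.sum_le_sum_of_subset_of_nonneg (Finset.subset_univ _)
    fun _ _ _ => abs_nonneg _) ?_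
  exact le_of_lt hφ.2.2.2.2

end Stmt12Aux
set_option linter.unusedSectionVars false
set_option maxHeartbeats 1000000
namespace Stmt12Aux

open Real MeasureTheory

variable {G : Type*} [Group G] [DecidableEq G]
variable {X : Type*} [MeasurableSpace X] [MulAction G X]
variable (μ : Measure X) {m n : ℕ}

/-- Coarsening a family indexed by `Fin m` along `r`. -/
def coarsen (r : Fin m → Fin n) {d : ℕ} (θ : Fin m → Set (Fin d)) :
    Fin n → Set (Fin d) :=
  fun j => ⋃ i ∈ {i : Fin m | r i = j}, θ i

lemma restrict_r_eq_coarsen {d : ℕ} (r : Fin m → Fin n)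
    (φ : (G → Fin m) → Set (Fin d)) :
    restrictHom r φ = coarsen r (restrictHom (id : Fin m → Fin m) φ) := by
  funext j; ext x
  simp only [restrictHom, coarsen, Set.mem_iUnion, Set.mem_setOf_eq, id_eq]
  constructor
  · rintro ⟨f, hf, hx⟩
    exact ⟨f 1, hf, ⟨f, rfl, hx⟩⟩
  · rintro ⟨i, hi, f, hf, hx⟩
    exact ⟨f, by rw [hf]; exact hi, hx⟩

/-- `N_j(t) = ∑_{r i = j} (μ(A_i) + t)`. -/
noncomputable def NNt (A : Fin m → Set X) (r : Fin m → Fin n) (t : ℝ) (j : Fin n) : ℝ :=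
  ∑ i ∈ Finset.univ.filter (fun i => r i = j), ((μ (A i)).toReal + t)

/-- The entropy-like constant controlling the fiber counting. -/
noncomputable def Cb (A : Fin m → Set X) (r : Fin m → Fin n) (t : ℝ) : ℝ :=
  ∑ i, ((μ (A i)).toReal + t) *
    (Real.log (NNt μ A r t (r i)) - Real.log ((μ (A i)).toReal + t))

lemma le_NNt (A : Fin m → Set X) (r : Fin m → Fin n) {t : ℝ} (ht : 0 ≤ t) (i : Fin m) :
    (μ (A i)).toReal + t ≤ NNt μ A r t (r i) := by
  refine Finset.single_le_sum (f := fun i' => (μ (A i')).toReal + t)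
    (fun i' _ => by positivity) ?_
  simp

lemma NNt_pos (A : Fin m → Set X) (r : Fin m → Fin n) {t : ℝ} (ht : 0 < t) (i : Fin m) :
    0 < NNt μ A r t (r i) :=
  lt_of_lt_of_le (by positivity) (le_NNt μ A r ht.le i)

lemma Cb_nonneg (A : Fin m → Set X) (r : Fin m → Fin n) {t : ℝ} (ht : 0 < t) :
    0 ≤ Cb μ A r t := by
  refine Finset.sum_nonneg fun i _ => mul_nonneg (by positivity) ?_
  rw [sub_nonneg]
  exact Real.log_le_log (by positivity) (le_NNt μ A r ht.le i)

/-- **Core counting estimate**. -/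
lemma count_le [IsProbabilityMeasure μ] {A : Fin m → Set X}
    (hA : IsFinPartition A)
    (hact : ∀ g : G, MeasurePreserving (fun x : X => g • x) μ μ)
    {F : Finset G} (h1F : (1 : G) ∈ F) {t : ℝ} (ht : 0 < t)
    {d : ℕ} (σ : G → Equiv.Perm (Fin d)) (r : Fin m → Fin n) :
    (homCount μ A (id : Fin m → Fin m) F t σ : ℝ)
      ≤ (homCount μ A r F t σ : ℝ) * Real.exp (d * Cb μ A r t) := by
  classical
  set a : Fin m → ℝ := fun i => (μ (A i)).toReal with ha
  have ha0 : ∀ i, 0 ≤ a i := fun i => ENNReal.toReal_nonneg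
  set C : ℝ := Cb μ A r t with hC
  have hCpos : 0 ≤ C := Cb_nonneg μ A r ht
  set Hom : Set ((G → Fin m) → Set (Fin d)) := {φ | IsHom μ A F t σ φ} with hHom
  haveI : Fintype (Fin m → Set (Fin d)) := Fintype.ofFinite _
  haveI : Fintype (Fin n → Set (Fin d)) := Fintype.ofFinite _
  set T : Set (Fin m → Set (Fin d)) := restrictHom (id : Fin m → Fin m) '' Hom with hT
  have hUT : restrictHom r '' Hom = coarsen r '' T := by
    rw [hT, Set.image_image]
    exact Set.image_congr fun φ _ => restrict_r_eq_coarsen r φ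
  set tT : Finset (Fin m → Set (Fin d)) := T.toFinset with htT
  have hcid : homCount μ A (id : Fin m → Fin m) F t σ = tT.card := by
    rw [homCount, htT, Set.ncard_eq_toFinset_card']
  have hcr : homCount μ A r F t σ = (tT.image (coarsen r)).card := by
    rw [homCount, hUT, Set.ncard_eq_toFinset_card', htT, Set.toFinset_image]
  -- properties of elements of T
  have hTprops : ∀ θ ∈ T,
      Pairwise (Function.onFun Disjoint θ) ∧ (⋃ i, θ i) = Set.univ ∧
      ∀ i, ((θ i).ncard : ℝ) ≤ (a i + t) * d := by
    rintro θ ⟨φ, hφ, rfl⟩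
    refine ⟨restrict_disjoint hφ.2.1 h1F, restrict_cover hφ.2.2.1, fun i => ?_⟩
    have hclose := unif_restrict_close μ hA hact h1F hφ i
    have hle : unif (restrictHom (id : Fin m → Fin m) φ i) ≤ a i + t := by
      have h2 := (abs_le.mp hclose).2
      simp only [ha]
      linarith
    rcases Nat.eq_zero_or_pos d with hd0 | hd0
    · subst hd0
      have he : restrictHom (id : Fin m → Fin m) φ i = (∅ : Set (Fin 0)) := by
        ext k; exact absurd k.2 (by omega)
      rw [he]
      simp
    · have hdpos : (0 : ℝ) < d := by exact_mod_cast hd0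
      rw [unif, div_le_iff₀ hdpos] at hle
      exact hle
  -- the fiber bound
  have hfiber : ∀ ψ ∈ tT.image (coarsen r),
      (((tT.filter (fun θ => coarsen r θ = ψ)).card : ℝ)) ≤ Real.exp (d * C) := by
    intro ψ hψ
    obtain ⟨θ₀, hθ₀T, hθ₀ψ⟩ := Finset.mem_image.mp hψ
    have hθ₀T' : θ₀ ∈ T := Set.mem_toFinset.mp hθ₀T
    obtain ⟨hθ₀dis, hθ₀cov, -⟩ := hTprops θ₀ hθ₀T'
    have hψcov : (⋃ j, ψ j) = Set.univ := by
      rw [← hθ₀ψ]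
      apply Set.eq_univ_of_univ_subset
      rw [← hθ₀cov]
      rintro x hx
      obtain ⟨i, hi⟩ := Set.mem_iUnion.mp hx
      exact Set.mem_iUnion.mpr ⟨r i, Set.mem_biUnion rfl hi⟩
    have hψdis : Pairwise (Function.onFun Disjoint ψ) := by
      rw [← hθ₀ψ]
      intro j j' hjj
      unfold Function.onFun coarsen
      refine Set.disjoint_iUnion₂_left.mpr fun i hi =>
        Set.disjoint_iUnion₂_right.mpr fun i' hi' => ?_
      refine hθ₀dis fun he => hjj ?_
      rw [← hi, ← hi', he]
    set Fib : Finset (Fin m → Set (Fin d)) := tT.filter (fun θ => coarsen r θ = ψ)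
      with hFib
    rcases Finset.eq_empty_or_nonempty Fib with hFe | ⟨θb, hθb⟩
    · rw [hFe]; simpa using le_of_lt (Real.exp_pos _)
    rcases Nat.eq_zero_or_pos d with hd0 | hd0
    · subst hd0
      have hcard1 : Fib.card ≤ 1 := by
        refine Finset.card_le_one.mpr fun θ hθ θ' hθ' => ?_
        funext i; ext k; exact absurd k.2 (by omega)
      calc (Fib.card : ℝ) ≤ 1 := by exact_mod_cast hcard1
        _ ≤ Real.exp (↑(0 : ℕ) * C) := by simp
    have hdpos : (0 : ℝ) < d := by exact_mod_cast hd0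
    haveI hnem : Nonempty (Fin m) := by
      obtain ⟨-, hcov, -⟩ := hTprops θb (Set.mem_toFinset.mp (Finset.mem_filter.mp hθb).1)
      have hk : (⟨0, hd0⟩ : Fin d) ∈ ⋃ i, θb i := by rw [hcov]; trivial
      obtain ⟨i, -⟩ := Set.mem_iUnion.mp hk
      exact ⟨i⟩
    set col : (Fin m → Set (Fin d)) → Fin d → Fin m := fun θ k =>
      if h : ∃ i, k ∈ θ i then h.choose else Classical.arbitrary _ with hcol
    have hcol_mem : ∀ θ ∈ Fib, ∀ k, k ∈ θ (col θ k) := by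
      intro θ hθ k
      obtain ⟨-, hcov, -⟩ := hTprops θ (Set.mem_toFinset.mp (Finset.mem_filter.mp hθ).1)
      have hex : ∃ i, k ∈ θ i := Set.mem_iUnion.mp (by rw [hcov]; trivial)
      rw [hcol]; simp only [dif_pos hex]; exact hex.choose_spec
    have hθeq : ∀ θ ∈ Fib, ∀ i, θ i = {k | col θ k = i} := by
      intro θ hθ i
      obtain ⟨hdis, -, -⟩ := hTprops θ (Set.mem_toFinset.mp (Finset.mem_filter.mp hθ).1)
      ext k
      constructor
      · intro hk
        by_contra hne
        have hne' : col θ k ≠ i := hne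
        exact Set.disjoint_left.mp (hdis hne') (hcol_mem θ hθ k) hk
      · intro hk
        have hm := hcol_mem θ hθ k
        rwa [Set.mem_setOf_eq.mp hk] at hm
    set Cset : Finset (Fin d → Fin m) := Finset.univ.filter
      (fun c => (∀ k, k ∈ ψ (r (c k))) ∧
        ∀ i, (((Finset.univ.filter (fun k => c k = i)).card : ℝ)) ≤ (a i + t) * d)
      with hCset
    have hinj : Fib.card ≤ Cset.card := by
      refine Finset.card_le_card_of_injOn col ?_ ?_
      · intro θ hθ
        obtain ⟨-, -, hsize⟩ := hTprops θ (Set.mem_toFinset.mp (Finset.mem_filter.mp hθ).1)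
        have hcψ : coarsen r θ = ψ := (Finset.mem_filter.mp hθ).2
        refine Finset.mem_filter.mpr ⟨Finset.mem_univ _, fun k => ?_, fun i => ?_⟩
        · have hk := hcol_mem θ hθ k
          have hsub : θ (col θ k) ⊆ ψ (r (col θ k)) := by
            rw [← hcψ]
            exact Set.subset_biUnion_of_mem rfl
          exact hsub hk
        · have hcard : (Finset.univ.filter (fun k => col θ k = i)).card = (θ i).ncard := by
            rw [hθeq θ hθ i, Set.ncard_eq_toFinset_card']
            congr 1
            ext k; simp
          rw [hcard]
          exact hsize i
      · intro θ hθ θ' hθ' hcc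
        have hθF := Finset.mem_coe.mp hθ
        have hθF' := Finset.mem_coe.mp hθ'
        funext i
        rw [hθeq θ hθF i, hθeq θ' hθF' i, hcc]
    have hCbound : (Cset.card : ℝ) ≤ Real.exp (d * C) := by
      set v : Fin m → ℝ := fun i => (a i + t) / NNt μ A r t (r i) with hv
      have hvpos : ∀ i, 0 < v i := fun i => div_pos (by positivity) (NNt_pos μ A r ht i)
      set Compat : Finset (Fin d → Fin m) :=
        Finset.univ.filter (fun c => ∀ k, k ∈ ψ (r (c k))) with hCompat
      have hsub : Cset ⊆ Compat := by
        intro c hc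
        simp only [hCset, Finset.mem_filter, Finset.mem_univ, true_and] at hc
        exact Finset.mem_filter.mpr ⟨Finset.mem_univ _, hc.1⟩
      set Al : Fin d → Finset (Fin m) := fun k => Finset.univ.filter (fun i => k ∈ ψ (r i))
        with hAl
      have hCompatPi : Compat = Fintype.piFinset Al := by
        ext c
        simp [hCompat, hAl, Fintype.mem_piFinset]
      have hAl1 : ∀ k : Fin d, ∑ i ∈ Al k, v i = 1 := by
        intro k
        have hk : k ∈ ⋃ j, ψ j := by rw [hψcov]; trivial
        obtain ⟨j₀, hkj₀⟩ := Set.mem_iUnion.mp hk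
        have hAlk : Al k = Finset.univ.filter (fun i => r i = j₀) := by
          ext i
          simp only [hAl, Finset.mem_filter, Finset.mem_univ, true_and]
          constructor
          · intro hki
            by_contra hne
            exact Set.disjoint_left.mp (hψdis hne) hki hkj₀
          · intro h; rw [h]; exact hkj₀
        obtain ⟨i₀, hi₀, -⟩ : ∃ i, r i = j₀ ∧ k ∈ θ₀ i := by
          have hm : k ∈ coarsen r θ₀ j₀ := by rw [hθ₀ψ]; exact hkj₀
          simpa [coarsen, Set.mem_iUnion] using hm
        have hNpos : 0 < NNt μ A r t j₀ := by
          rw [← hi₀]; exact NNt_pos μ A r ht i₀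
        rw [hAlk]
        have hcongr : ∀ i ∈ Finset.univ.filter (fun i => r i = j₀),
            v i = (a i + t) / NNt μ A r t j₀ := by
          intro i hi
          simp only [Finset.mem_filter] at hi
          rw [hv]
          simp only []
          rw [hi.2]
        rw [Finset.sum_congr rfl hcongr, ← Finset.sum_div,
          div_eq_one_iff_eq hNpos.ne']
        rfl
      have hsum1 : ∑ c ∈ Compat, ∏ k, v (c k) = 1 := by
        rw [hCompatPi, ← Finset.prod_univ_sum]
        rw [Finset.prod_congr rfl fun k _ => hAl1 k]
        simp
      have hwlb : ∀ c ∈ Cset, Real.exp (-(d * C)) ≤ ∏ k, v (c k) := by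
        intro c hc
        simp only [hCset, Finset.mem_filter, Finset.mem_univ, true_and] at hc
        have hprod : ∏ k, v (c k)
            = ∏ i, v i ^ (Finset.univ.filter (fun k => c k = i)).card := by
          rw [← Finset.prod_fiberwise_of_maps_to (fun k _ => Finset.mem_univ (c k))
            (fun k => v (c k))]
          refine Finset.prod_congr rfl fun i _ => ?_
          rw [Finset.prod_congr rfl (fun k hk => by rw [(Finset.mem_filter.mp hk).2]),
            Finset.prod_const]
        rw [hprod]
        have hterm : ∀ i, Real.exp (((a i + t) * d) * Real.log (v i))
            ≤ v i ^ (Finset.univ.filter (fun k => c k = i)).card := by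
          intro i
          have hlogv : Real.log (v i) ≤ 0 := by
            apply Real.log_nonpos (le_of_lt (hvpos i))
            rw [hv]
            exact div_le_one_of_le₀ (le_NNt μ A r ht.le i)
              (le_of_lt (NNt_pos μ A r ht i))
          have hkmul : ((a i + t) * d) * Real.log (v i)
              ≤ ((Finset.univ.filter (fun k => c k = i)).card : ℝ) * Real.log (v i) :=
            mul_le_mul_of_nonpos_right (hc.2 i) hlogv
          calc Real.exp (((a i + t) * d) * Real.log (v i))
              ≤ Real.exp (((Finset.univ.filter (fun k => c k = i)).card : ℝ)
                  * Real.log (v i)) := Real.exp_le_exp.mpr hkmul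
            _ = v i ^ (Finset.univ.filter (fun k => c k = i)).card := by
                rw [← Real.log_pow, Real.exp_log (pow_pos (hvpos i) _)]
        calc Real.exp (-(d * C))
            = ∏ i, Real.exp (((a i + t) * d) * Real.log (v i)) := by
              rw [← Real.exp_sum]
              congr 1
              rw [hC, Cb, Finset.mul_sum, ← Finset.sum_neg_distrib]
              refine Finset.sum_congr rfl fun i _ => ?_
              have hlv : Real.log (v i)
                  = Real.log (a i + t) - Real.log (NNt μ A r t (r i)) := by
                rw [hv]
                exact Real.log_div (by positivity) (NNt_pos μ A r ht i).ne'
              rw [hlv]; ring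
          _ ≤ ∏ i, v i ^ (Finset.univ.filter (fun k => c k = i)).card :=
              Finset.prod_le_prod (fun i _ => (Real.exp_pos _).le)
                (fun i _ => hterm i)
      have hle1 : (Cset.card : ℝ) * Real.exp (-(d * C)) ≤ 1 := by
        have h1 : (Cset.card : ℝ) * Real.exp (-(d * C))
            = ∑ _c ∈ Cset, Real.exp (-(d * C)) := by
          rw [Finset.sum_const, nsmul_eq_mul]
        rw [h1]
        calc ∑ c ∈ Cset, Real.exp (-(d * C)) ≤ ∑ c ∈ Cset, ∏ k, v (c k) :=
              Finset.sum_le_sum fun c hc => hwlb c hc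
          _ ≤ ∑ c ∈ Compat, ∏ k, v (c k) :=
              Finset.sum_le_sum_of_subset_of_nonneg hsub
                (fun c _ _ => Finset.prod_nonneg fun k _ => (hvpos _).le)
          _ = 1 := hsum1
      rw [Real.exp_neg, ← div_eq_mul_inv] at hle1
      exact (div_le_one (Real.exp_pos _)).mp hle1
    calc ((tT.filter (fun θ => coarsen r θ = ψ)).card : ℝ)
        ≤ (Cset.card : ℝ) := by exact_mod_cast hinj
      _ ≤ Real.exp (d * C) := hCbound
  have hkey := Finset.card_le_mul_card_image (f := coarsen r) tT
    (Nat.floor (Real.exp (d * C)))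
    (fun ψ hψ => Nat.le_floor (hfiber ψ hψ))
  rw [hcid, hcr]
  calc (tT.card : ℝ)
      ≤ (Nat.floor (Real.exp (d * C)) : ℝ) * ((tT.image (coarsen r)).card : ℝ) := by
        exact_mod_cast hkey
    _ ≤ Real.exp (d * C) * ((tT.image (coarsen r)).card : ℝ) := by
        have hfl := Nat.floor_le (le_of_lt (Real.exp_pos (↑d * C)))
        gcongr
    _ = ((tT.image (coarsen r)).card : ℝ) * Real.exp (d * C) := mul_comm _ _

end Stmt12Aux
set_option linter.unusedSectionVars false
set_option maxHeartbeats 1000000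
namespace Stmt12Aux

open Real MeasureTheory Filter

variable {G : Type*} [Group G] [DecidableEq G]
variable {X : Type*} [MeasurableSpace X] [MulAction G X]
variable (μ : Measure X) {m n : ℕ}

lemma homCount_le_card (A : Fin m → Set X) (r : Fin m → Fin n) (F : Finset G)
    (δ : ℝ) {d : ℕ} (σ : G → Equiv.Perm (Fin d)) :
    homCount μ A r F δ σ ≤ 2 ^ (n * d) := by
  classical
  have h1 : homCount μ A r F δ σ ≤ Nat.card (Fin n → Set (Fin d)) := by
    rw [homCount, ← Set.ncard_univ]
    exact Set.ncard_le_ncard (Set.subset_univ _) (Set.toFinite _)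
  refine h1.trans ?_
  have h2 : Nat.card (Set (Fin d)) = 2 ^ d := by
    have h3 : Nat.card (Set (Fin d)) = Nat.card (Fin d → Prop) := rfl
    rw [h3, Nat.card_fun, Nat.card_eq_fintype_card (α := Prop), Fintype.card_prop,
      Nat.card_eq_fintype_card, Fintype.card_fin]
  rw [Nat.card_fun, h2, Nat.card_eq_fintype_card, Fintype.card_fin, ← pow_mul, mul_comm d n]

lemma log_homCount_div_nonneg (A : Fin m → Set X) (r : Fin m → Fin n) (F : Finset G)
    (δ : ℝ) {d : ℕ} (σ : G → Equiv.Perm (Fin d)) :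
    0 ≤ Real.log (homCount μ A r F δ σ) / d :=
  div_nonneg (Real.log_natCast_nonneg _) (Nat.cast_nonneg _)

lemma log_homCount_div_le (A : Fin m → Set X) (r : Fin m → Fin n) (F : Finset G)
    (δ : ℝ) {d : ℕ} (σ : G → Equiv.Perm (Fin d)) :
    Real.log (homCount μ A r F δ σ) / d ≤ (n : ℝ) * Real.log 2 := by
  have hnl2 : (0 : ℝ) ≤ (n : ℝ) * Real.log 2 :=
    mul_nonneg (Nat.cast_nonneg _) (Real.log_nonneg one_le_two)
  rcases Nat.eq_zero_or_pos (homCount μ A r F δ σ) with h0 | hpos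
  · rw [h0]
    simpa using hnl2
  rcases Nat.eq_zero_or_pos d with hd0 | hd0
  · subst hd0; simpa using hnl2
  have hdpos : (0 : ℝ) < d := by exact_mod_cast hd0
  have hlog : Real.log (homCount μ A r F δ σ) ≤ ((n * d : ℕ) : ℝ) * Real.log 2 := by
    have h1 : Real.log (homCount μ A r F δ σ) ≤ Real.log ((2 : ℝ) ^ (n * d)) := by
      apply Real.log_le_log (by exact_mod_cast hpos)
      have := homCount_le_card μ A r F δ σ
      calc ((homCount μ A r F δ σ : ℕ) : ℝ) ≤ ((2 ^ (n * d) : ℕ) : ℝ) := by exact_mod_cast this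
        _ = (2 : ℝ) ^ (n * d) := by push_cast; ring
    rwa [Real.log_pow] at h1
  rw [div_le_iff₀ hdpos]
  calc Real.log (homCount μ A r F δ σ) ≤ ((n * d : ℕ) : ℝ) * Real.log 2 := hlog
    _ = (n : ℝ) * Real.log 2 * d := by push_cast; ring

lemma hFδ_nonneg (A : Fin m → Set X) (r : Fin m → Fin n) (F : Finset G) (δ : ℝ)
    (dseq : ℕ → ℕ) (σ : ∀ i, G → Equiv.Perm (Fin (dseq i))) :
    0 ≤ hFδ μ A r F δ dseq σ := by
  refine le_limsup_of_frequently_le (Frequently.of_forall fun i =>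
    log_homCount_div_nonneg μ A r F δ (σ i)) ?_
  exact isBoundedUnder_of ⟨(n : ℝ) * Real.log 2,
    fun i => log_homCount_div_le μ A r F δ (σ i)⟩

lemma homCount_mono (A : Fin m → Set X) (r : Fin m → Fin n) (F : Finset G)
    {δ δ' : ℝ} (h : δ' ≤ δ) {d : ℕ} (σ : G → Equiv.Perm (Fin d)) :
    homCount μ A r F δ' σ ≤ homCount μ A r F δ σ := by
  refine Set.ncard_le_ncard (Set.image_mono fun φ hφ => ?_) (Set.toFinite _)
  obtain ⟨h1, h2, h3, h4, h5⟩ := hφ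
  exact ⟨h1, h2, h3, fun s hs => lt_of_lt_of_le (h4 s hs) h, lt_of_lt_of_le h5 h⟩

lemma log_nat_mono {p q : ℕ} (h : p ≤ q) : Real.log p ≤ Real.log q := by
  rcases Nat.eq_zero_or_pos p with h0 | hpos
  · rw [h0]; simpa using Real.log_natCast_nonneg q
  exact Real.log_le_log (by exact_mod_cast hpos) (by exact_mod_cast h)

lemma hFδ_mono (A : Fin m → Set X) (r : Fin m → Fin n) (F : Finset G)
    {δ δ' : ℝ} (h : δ' ≤ δ)
    (dseq : ℕ → ℕ) (σ : ∀ i, G → Equiv.Perm (Fin (dseq i))) :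
    hFδ μ A r F δ' dseq σ ≤ hFδ μ A r F δ dseq σ := by
  refine limsup_le_limsup (Eventually.of_forall fun i => ?_) ?_ ?_
  · have hlog := log_nat_mono (homCount_mono μ A r F h (σ i))
    exact div_le_div_of_nonneg_right hlog (Nat.cast_nonneg _)
  · have hb : Filter.IsBoundedUnder (· ≥ ·) Filter.atTop
        (fun i => Real.log (homCount μ A r F δ' (σ i)) / (dseq i)) :=
      isBoundedUnder_of ⟨0, fun i => log_homCount_div_nonneg μ A r F δ' (σ i)⟩
    exact hb.isCoboundedUnder_le
  · exact isBoundedUnder_of ⟨(n : ℝ) * Real.log 2,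
      fun i => log_homCount_div_le μ A r F δ (σ i)⟩

end Stmt12Aux
set_option linter.unusedSectionVars false
set_option maxHeartbeats 1000000
namespace Stmt12Aux

open Real MeasureTheory Filter

variable {G : Type*} [Group G] [DecidableEq G]
variable {X : Type*} [MeasurableSpace X] [MulAction G X]
variable (μ : Measure X) {m n : ℕ}

lemma measure_P_eq [IsProbabilityMeasure μ] {P : Fin n → Set X} {A : Fin m → Set X}
    {r : Fin m → Fin n} (hP : IsFinPartition P) (hA : IsFinPartition A)
    (hr : PartRefines A P r) (j : Fin n) :
    (μ (P j)).toReal = ∑ i ∈ Finset.univ.filter (fun i => r i = j),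
      (μ (A i)).toReal := by
  classical
  have hset : P j = ⋃ i ∈ Finset.univ.filter (fun i => r i = j), A i := by
    apply Set.Subset.antisymm
    · intro x hx
      have hu : x ∈ ⋃ i, A i := by rw [hA.2.2]; trivial
      obtain ⟨i, hi⟩ := Set.mem_iUnion.mp hu
      have hrij : r i = j := by
        by_contra hne
        exact Set.disjoint_left.mp (hP.2.1 hne) (hr i hi) hx
      exact Set.mem_biUnion (Finset.mem_filter.mpr ⟨Finset.mem_univ _, hrij⟩) hi
    · refine Set.iUnion₂_subset fun i hi => ?_
      simp only [Finset.mem_filter, Finset.mem_univ, true_and] at hi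
      rw [← hi]
      exact hr i
  rw [hset, measure_biUnion_finset (fun i _ i' _ hne => hA.2.1 hne)
    (fun i _ => hA.1 i)]
  exact ENNReal.toReal_sum fun i _ => measure_ne_top μ _

lemma Cb_form (A : Fin m → Set X) (r : Fin m → Fin n) (t : ℝ) :
    Cb μ A r t = (∑ j, NNt μ A r t j * Real.log (NNt μ A r t j))
      - ∑ i, ((μ (A i)).toReal + t) * Real.log ((μ (A i)).toReal + t) := by
  classical
  rw [Cb]
  have hexp : ∀ i : Fin m, ((μ (A i)).toReal + t) *
      (Real.log (NNt μ A r t (r i)) - Real.log ((μ (A i)).toReal + t))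
      = ((μ (A i)).toReal + t) * Real.log (NNt μ A r t (r i))
        - ((μ (A i)).toReal + t) * Real.log ((μ (A i)).toReal + t) := fun i => by ring
  rw [Finset.sum_congr rfl fun i _ => hexp i, Finset.sum_sub_distrib]
  congr 1
  rw [← Finset.sum_fiberwise_of_maps_to (g := r)
    (fun i (_ : i ∈ Finset.univ) => Finset.mem_univ (r i))
    (fun i => ((μ (A i)).toReal + t) * Real.log (NNt μ A r t (r i)))]
  refine Finset.sum_congr rfl fun j _ => ?_
  have hcongr : ∀ i ∈ Finset.univ.filter (fun i => r i = j),
      ((μ (A i)).toReal + t) * Real.log (NNt μ A r t (r i))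
      = ((μ (A i)).toReal + t) * Real.log (NNt μ A r t j) := by
    intro i hi
    rw [(Finset.mem_filter.mp hi).2]
  rw [Finset.sum_congr rfl hcongr, ← Finset.sum_mul]
  rfl

lemma Cb_continuous (A : Fin m → Set X) (r : Fin m → Fin n) :
    Continuous (fun t => Cb μ A r t) := by
  have h1 : ∀ j : Fin n, Continuous (fun t => NNt μ A r t j) := by
    intro j
    unfold NNt
    exact continuous_finset_sum _ fun i _ => (continuous_const.add continuous_id)
  simp only [Cb_form]
  refine Continuous.sub ?_ ?_
  · exact continuous_finset_sum _ fun j _ => Real.continuous_mul_log.comp (h1 j)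
  · exact continuous_finset_sum _ fun i _ =>
      Real.continuous_mul_log.comp (continuous_const.add continuous_id)

lemma Cb_zero [IsProbabilityMeasure μ] {P : Fin n → Set X} {A : Fin m → Set X}
    {r : Fin m → Fin n} (hP : IsFinPartition P) (hA : IsFinPartition A)
    (hr : PartRefines A P r) :
    Cb μ A r 0 = shannonEnt μ A - shannonEnt μ P := by
  have hN : ∀ j, NNt μ A r 0 j = (μ (P j)).toReal := by
    intro j
    rw [NNt, measure_P_eq μ hP hA hr j]
    simp
  rw [Cb_form]
  simp only [hN, add_zero, shannonEnt]
  ring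

lemma pointwise_bound [IsProbabilityMeasure μ] {A : Fin m → Set X}
    (hA : IsFinPartition A)
    (hact : ∀ g : G, MeasurePreserving (fun x : X => g • x) μ μ)
    {F : Finset G} (h1F : (1 : G) ∈ F) {t : ℝ} (ht : 0 < t)
    {d : ℕ} (σ : G → Equiv.Perm (Fin d)) (r : Fin m → Fin n) :
    Real.log (homCount μ A (id : Fin m → Fin m) F t σ) / d
      ≤ Real.log (homCount μ A r F t σ) / d + Cb μ A r t := by
  have hCpos := Cb_nonneg μ A r ht
  have hcount := count_le μ hA hact h1F ht σ r
  rcases Nat.eq_zero_or_pos (homCount μ A (id : Fin m → Fin m) F t σ) with h0 | hpos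
  · rw [h0]
    simp only [Nat.cast_zero, Real.log_zero, zero_div]
    exact add_nonneg (log_homCount_div_nonneg μ A r F t σ) hCpos
  have hposr : 0 < homCount μ A r F t σ := by
    rcases Nat.eq_zero_or_pos (homCount μ A r F t σ) with h | h
    · rw [h] at hcount
      simp only [Nat.cast_zero, zero_mul] at hcount
      have h1 : (1 : ℝ) ≤ (homCount μ A (id : Fin m → Fin m) F t σ : ℝ) := by
        exact_mod_cast hpos
      linarith
    · exact h
  have hlog : Real.log (homCount μ A (id : Fin m → Fin m) F t σ)
      ≤ Real.log (homCount μ A r F t σ) + d * Cb μ A r t := by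
    calc Real.log (homCount μ A (id : Fin m → Fin m) F t σ)
        ≤ Real.log ((homCount μ A r F t σ : ℝ) * Real.exp (d * Cb μ A r t)) :=
          Real.log_le_log (by exact_mod_cast hpos) hcount
      _ = Real.log (homCount μ A r F t σ) + d * Cb μ A r t := by
          rw [Real.log_mul (by exact_mod_cast hposr.ne') (Real.exp_ne_zero _),
            Real.log_exp]
  rcases Nat.eq_zero_or_pos d with hd0 | hd0
  · subst hd0
    simp only [Nat.cast_zero, div_zero, zero_add]
    exact hCpos
  have hdpos : (0 : ℝ) < d := by exact_mod_cast hd0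
  rw [div_add' _ _ _ hdpos.ne']
  apply div_le_div_of_nonneg_right ?_ hdpos.le
  calc Real.log (homCount μ A (id : Fin m → Fin m) F t σ)
      ≤ Real.log (homCount μ A r F t σ) + d * Cb μ A r t := hlog
    _ = Real.log (homCount μ A r F t σ) + Cb μ A r t * d := by ring

lemma hFδ_key [IsProbabilityMeasure μ] {A : Fin m → Set X}
    (hA : IsFinPartition A)
    (hact : ∀ g : G, MeasurePreserving (fun x : X => g • x) μ μ)
    {F : Finset G} (h1F : (1 : G) ∈ F) {t : ℝ} (ht : 0 < t)
    (dseq : ℕ → ℕ) (σ : ∀ i, G → Equiv.Perm (Fin (dseq i))) (r : Fin m → Fin n) :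
    hFδ μ A (id : Fin m → Fin m) F t dseq σ
      ≤ hFδ μ A r F t dseq σ + Cb μ A r t := by
  have hbddr : Filter.IsBoundedUnder (· ≤ ·) Filter.atTop
      (fun i => Real.log (homCount μ A r F t (σ i)) / (dseq i)) :=
    isBoundedUnder_of ⟨(n : ℝ) * Real.log 2,
      fun i => log_homCount_div_le μ A r F t (σ i)⟩
  have hcobddr : Filter.IsCoboundedUnder (· ≤ ·) Filter.atTop
      (fun i => Real.log (homCount μ A r F t (σ i)) / (dseq i)) := by
    have hb : Filter.IsBoundedUnder (· ≥ ·) Filter.atTop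
        (fun i => Real.log (homCount μ A r F t (σ i)) / (dseq i)) :=
      isBoundedUnder_of ⟨0, fun i => log_homCount_div_nonneg μ A r F t (σ i)⟩
    exact hb.isCoboundedUnder_le
  have hstep : hFδ μ A (id : Fin m → Fin m) F t dseq σ
      ≤ limsup (fun i => Real.log (homCount μ A r F t (σ i)) / (dseq i)
          + Cb μ A r t) atTop := by
    refine limsup_le_limsup (Eventually.of_forall fun i =>
      pointwise_bound μ hA hact h1F ht (σ i) r) ?_ ?_
    · have hb : Filter.IsBoundedUnder (· ≥ ·) Filter.atTop
          (fun i => Real.log (homCount μ A (id : Fin m → Fin m) F t (σ i)) / (dseq i)) :=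
        isBoundedUnder_of ⟨0, fun i => log_homCount_div_nonneg μ A _ F t (σ i)⟩
      exact hb.isCoboundedUnder_le
    · exact isBoundedUnder_of ⟨(n : ℝ) * Real.log 2 + Cb μ A r t,
        fun i => add_le_add_left (log_homCount_div_le μ A r F t (σ i)) _⟩
  refine hstep.trans ?_
  rw [limsup_add_const atTop _ (Cb μ A r t) hbddr hcobddr]
  exact le_rfl

end Stmt12Aux

/-- Lemma 4.1(ii).  Let `(X,B,μ)` be a probability space with a
measure-preserving action of a countable sofic group `G`, and `Σ` a sofic approximation
sequence.  For finite measurable partitions `α ≥ ξ` (refinement witnessed by `r`), one has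
`h_{Σ,μ}^ξ(α) ≥ h_{Σ,μ}^α(α) - H_μ(α|ξ)`; since `α` refines `ξ`, the conditional
Shannon entropy is `H_μ(α|ξ) = H_μ(α) - H_μ(ξ)`.  Here `h_{Σ,μ}^α(α)` is obtained by
taking the identity refinement map. -/
theorem stmt12 {G : Type*} [Group G] [Countable G] [DecidableEq G]
    {X : Type*} [MeasurableSpace X] [MulAction G X]
    (μ : Measure X) [IsProbabilityMeasure μ]
    (hact : ∀ g : G, MeasurePreserving (fun x : X => g • x) μ μ)
    (dseq : ℕ → ℕ) (σ : ∀ i, G → Equiv.Perm (Fin (dseq i)))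
    (hσ : IsSoficApprox dseq σ)
    {n m : ℕ} (P : Fin n → Set X) (A : Fin m → Set X) (r : Fin m → Fin n)
    (hP : IsFinPartition P) (hA : IsFinPartition A) (hr : PartRefines A P r) :
    hPartLoc μ A (id : Fin m → Fin m) dseq σ - (shannonEnt μ A - shannonEnt μ P)
      ≤ hPartLoc μ A r dseq σ := by
  classical
  have hne : { x | ∃ (F : Finset G) (δ : ℝ), (1 : G) ∈ F ∧ 0 < δ ∧
      x = hFδ μ A r F δ dseq σ }.Nonempty :=
    ⟨hFδ μ A r {1} 1 dseq σ, {1}, 1, Finset.mem_singleton_self 1, one_pos, rfl⟩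
  show _ ≤ hPartLoc μ A r dseq σ
  unfold hPartLoc
  refine le_csInf hne ?_
  rintro b ⟨F, δ, h1F, hδ, rfl⟩
  rw [sub_le_iff_le_add]
  refine le_of_forall_pos_le_add fun ε hε => ?_
  have hcont := (Stmt12Aux.Cb_continuous μ A r).continuousAt (x := 0)
  have hC0 : Stmt12Aux.Cb μ A r 0 = shannonEnt μ A - shannonEnt μ P :=
    Stmt12Aux.Cb_zero μ hP hA hr
  have hev : ∀ᶠ t in nhds 0, Stmt12Aux.Cb μ A r t < Stmt12Aux.Cb μ A r 0 + ε :=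
    hcont.tendsto.eventually_lt_const (by linarith)
  obtain ⟨t0, ht0, hball⟩ := Metric.eventually_nhds_iff.mp hev
  set t := min δ (t0 / 2) with htdef
  have htpos : 0 < t := lt_min hδ (by linarith)
  have htδ : t ≤ δ := min_le_left _ _
  have htlt : dist t 0 < t0 := by
    rw [Real.dist_eq, sub_zero, abs_of_pos htpos]
    calc t ≤ t0 / 2 := min_le_right _ _
      _ < t0 := by linarith
  have hCt : Stmt12Aux.Cb μ A r t < (shannonEnt μ A - shannonEnt μ P) + ε := by
    have hb := hball htlt
    rwa [hC0] at hb
  have h1 : hPartLoc μ A (id : Fin m → Fin m) dseq σ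
      ≤ hFδ μ A (id : Fin m → Fin m) F t dseq σ := by
    unfold hPartLoc
    refine csInf_le ⟨0, ?_⟩ ⟨F, t, h1F, htpos, rfl⟩
    rintro x ⟨F', δ', h1', hδ', rfl⟩
    exact Stmt12Aux.hFδ_nonneg μ A _ F' δ' dseq σ
  have h2 := Stmt12Aux.hFδ_key μ hA hact h1F htpos dseq σ r
  have h3 := Stmt12Aux.hFδ_mono μ A r F htδ dseq σ
  have h4 : 0 ≤ Stmt12Aux.Cb μ A r t := Stmt12Aux.Cb_nonneg μ A r htpos
  calc hPartLoc μ A (id : Fin m → Fin m) dseq σ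
      ≤ hFδ μ A (id : Fin m → Fin m) F t dseq σ := h1
    _ ≤ hFδ μ A r F t dseq σ + Stmt12Aux.Cb μ A r t := h2
    _ ≤ hFδ μ A r F δ dseq σ + Stmt12Aux.Cb μ A r t := by linarith
    _ ≤ hFδ μ A r F δ dseq σ + (shannonEnt μ A - shannonEnt μ P) + ε := by linarith
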